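/- For a continuous function f : D → Y defined on a convex subset D of a normed space X, with Y a normed space, the Lipschitz constant of f equals the supremum norm of its little Lipschitz derivative: ‖f‖_lip = sup_{x∈D} lip f(x). -/

import Mathlib

open Metric Filter ENNReal Topology

/-- For a continuous f on a convex set D, ‖f‖_lip = ‖lip f‖_∞. -/
theorem lipNorm_eq_sup_lip {X Y : Type*} [NormedAddCommGroup X] [NormedSpace ℝ X]
    [NormedAddCommGroup Y] (D : Set X) (hD : Convex ℝ D) (f : X → Y)
    (hf : ContinuousOn f D) :
    (⨆ u ∈ D, ⨆ v ∈ D, edist (f u) (f v) / edist u v) =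
      ⨆ x ∈ D, liminf (fun r : ℝ => ⨆ u ∈ D ∩ ball x r,
        edist (f u) (f x) / ENNReal.ofReal r) (𝓝[>] (0:ℝ)) := by
  set L := ⨆ u ∈ D, ⨆ v ∈ D, edist (f u) (f v) / edist u v with hLdef
  set K := ⨆ x ∈ D, liminf (fun r : ℝ => ⨆ u ∈ D ∩ ball x r,
      edist (f u) (f x) / ENNReal.ofReal r) (𝓝[>] (0:ℝ)) with hKdef
  clear_value L K
  apply le_antisymm
  · -- hard direction: L ≤ K
    rw [hLdef]
    refine iSup₂_le fun u hu => iSup₂_le fun v hv => ?_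
    rcases eq_or_ne u v with rfl | huv
    · simp
    have hd : 0 < ‖v - u‖ := norm_pos_iff.mpr (sub_ne_zero.mpr huv.symm)
    set d : ℝ := ‖v - u‖ with hddef
    have heuv : edist u v = ENNReal.ofReal d := by
      rw [edist_dist, dist_eq_norm, norm_sub_rev]
    refine le_of_forall_gt_imp_ge_of_dense fun c hc => ?_
    rcases eq_or_ne c ∞ with rfl | hctop
    · exact le_top
    have hc0 : c ≠ 0 := (lt_of_le_of_lt (zero_le : 0 ≤ K) hc).ne'
    obtain ⟨c', hKc', hc'c⟩ := exists_between hc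
    have hc'top : c' ≠ ∞ := (hc'c.trans_le le_top).ne
    -- θ ∈ (0,1) with c' ≤ c * ofReal θ
    set θ : ℝ := max (1/2) ((c'/c).toReal) with hθdef
    have hθ0 : 0 < θ := lt_max_of_lt_left one_half_pos
    have hθ1 : θ < 1 := by
      refine max_lt one_half_lt_one ?_
      rw [ENNReal.toReal_div]
      exact div_lt_one (ENNReal.toReal_pos hc0 hctop) |>.mpr
        (ENNReal.toReal_strict_mono hctop hc'c)
    have hθkey : c' ≤ c * ENNReal.ofReal θ := by
      calc c' = c * (c' / c) := (ENNReal.mul_div_cancel hc0 hctop).symm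
        _ ≤ c * ENNReal.ofReal θ := by
            refine mul_le_mul_right ?_ c
            rw [← ENNReal.ofReal_toReal (ENNReal.div_lt_top hc'top hc0).ne]
            exact ENNReal.ofReal_le_ofReal (le_max_right _ _)
    -- the path
    set γ : ℝ → X := fun t => u + t • (v - u) with hγdef
    have hγD : ∀ t ∈ Set.Icc (0:ℝ) 1, γ t ∈ D := fun t ht =>
      hD.add_smul_sub_mem hu hv ht
    have hγcont : Continuous γ := by continuity
    set g : ℝ → ℝ≥0∞ := fun t => edist (f (γ t)) (f u) with hgdef
    have hgcont : ContinuousOn g (Set.Icc (0:ℝ) 1) :=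
      continuous_edist.comp_continuousOn
        ((hf.comp hγcont.continuousOn hγD).prodMk continuousOn_const)
    set A : Set ℝ := {t | t ∈ Set.Icc (0:ℝ) 1 ∧ g t ≤ c * ENNReal.ofReal (t * d)}
      with hAdef
    have h0A : (0:ℝ) ∈ A := by
      constructor
      · exact ⟨le_refl 0, zero_le_one⟩
      · simp [hgdef, hγdef]
    have hAIcc : A ⊆ Set.Icc (0:ℝ) 1 := fun t ht => ht.1
    have hAne : A.Nonempty := ⟨0, h0A⟩
    have hAbdd : BddAbove A := (isBounded_Icc (0:ℝ) 1).subset hAIcc |>.bddAbove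
    set T : ℝ := sSup A with hTdef
    have hTIcc : T ∈ Set.Icc (0:ℝ) 1 :=
      ⟨le_csSup hAbdd h0A, csSup_le hAne fun t ht => ht.1.2⟩
    have hTclos : T ∈ closure A := csSup_mem_closure hAne hAbdd
    have hnebot : (𝓝[A] T).NeBot := mem_closure_iff_nhdsWithin_neBot.mp hTclos
    have hTA : T ∈ A := by
      refine ⟨hTIcc, ?_⟩
      have t1 : Tendsto g (𝓝[A] T) (𝓝 (g T)) :=
        (hgcont T hTIcc).mono hAIcc
      have t2 : Tendsto (fun t => c * ENNReal.ofReal (t * d)) (𝓝[A] T)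
          (𝓝 (c * ENNReal.ofReal (T * d))) := by
        refine Tendsto.mono_left ?_ nhdsWithin_le_nhds
        exact ((ENNReal.continuous_const_mul hctop).comp
          (ENNReal.continuous_ofReal.comp (continuous_id.mul continuous_const))).tendsto T
      refine le_of_tendsto_of_tendsto t1 t2 ?_
      exact eventually_mem_nhdsWithin.mono fun t ht => ht.2
    have hT1 : T = 1 := by
      by_contra hT1
      have hTlt : T < 1 := lt_of_le_of_ne hTIcc.2 hT1
      have hxD : γ T ∈ D := hγD T hTIcc
      have hlim : liminf (fun r : ℝ => ⨆ w ∈ D ∩ ball (γ T) r,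
          edist (f w) (f (γ T)) / ENNReal.ofReal r) (𝓝[>] (0:ℝ)) ≤ K := by
        rw [hKdef]
        exact le_iSup₂ (f := fun x (_ : x ∈ D) => liminf (fun r : ℝ =>
          ⨆ w ∈ D ∩ ball x r, edist (f w) (f x) / ENNReal.ofReal r) (𝓝[>] (0:ℝ)))
          (γ T) hxD
      have hfreq : ∃ᶠ r in 𝓝[>] (0:ℝ), (⨆ w ∈ D ∩ ball (γ T) r,
          edist (f w) (f (γ T)) / ENNReal.ofReal r) < c' :=
        frequently_lt_of_liminf_lt (by isBoundedDefault) (lt_of_le_of_lt hlim hKc')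
      have hδ : 0 < (1 - T) * d := mul_pos (by linarith) hd
      obtain ⟨r, hsup, hr⟩ :=
        ((hfreq.and_eventually (eventually_of_mem
          (Ioo_mem_nhdsGT_of_mem ⟨le_refl (0:ℝ), hδ⟩) fun r hr => hr))).exists
      set t : ℝ := T + θ * r / d with htdef
      have hpos : 0 < θ * r / d := div_pos (mul_pos hθ0 hr.1) hd
      have ht0 : T < t := by rw [htdef]; linarith
      have ht1 : t ≤ 1 := by
        have h1 : θ * r < (1 - T) * d := by
          calc θ * r < 1 * r := by nlinarith [hr.1]
            _ = r := one_mul r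
            _ < (1 - T) * d := hr.2
        have h2 : θ * r / d < 1 - T := (div_lt_iff₀ hd).mpr (by linarith)
        rw [htdef]; linarith
      have htIcc : t ∈ Set.Icc (0:ℝ) 1 := ⟨by linarith [hTIcc.1], ht1⟩
      have hwD : γ t ∈ D := hγD t htIcc
      have hdist : dist (γ t) (γ T) = θ * r := by
        rw [hγdef, dist_eq_norm]
        simp only [add_sub_add_left_eq_sub, ← sub_smul]
        rw [norm_smul, Real.norm_eq_abs, abs_of_pos (by linarith : (0:ℝ) < t - T)]
        rw [← hddef, htdef]
        field_simp
        ring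
      have hball : γ t ∈ ball (γ T) r := by
        rw [mem_ball, hdist]
        nlinarith [hr.1]
      have hle : edist (f (γ t)) (f (γ T)) / ENNReal.ofReal r ≤ ⨆ w ∈ D ∩ ball (γ T) r,
          edist (f w) (f (γ T)) / ENNReal.ofReal r :=
        le_iSup₂ (f := fun w (_ : w ∈ D ∩ ball (γ T) r) =>
          edist (f w) (f (γ T)) / ENNReal.ofReal r) (γ t) ⟨hwD, hball⟩
      have hstep : edist (f (γ t)) (f (γ T)) < c' * ENNReal.ofReal r := by
        have := lt_of_le_of_lt hle hsup
        rw [ENNReal.div_lt_iff (Or.inl (ENNReal.ofReal_pos.mpr hr.1).ne')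
          (Or.inl ENNReal.ofReal_ne_top)] at this
        exact this
      have htA : t ∈ A := by
        refine ⟨htIcc, ?_⟩
        calc g t ≤ edist (f (γ t)) (f (γ T)) + edist (f (γ T)) (f u) :=
              edist_triangle _ _ _
          _ ≤ c * ENNReal.ofReal (θ * r) + c * ENNReal.ofReal (T * d) := by
              refine add_le_add ?_ hTA.2
              calc edist (f (γ t)) (f (γ T)) ≤ c' * ENNReal.ofReal r := hstep.le
                _ ≤ (c * ENNReal.ofReal θ) * ENNReal.ofReal r :=
                    mul_le_mul_left hθkey _
                _ = c * ENNReal.ofReal (θ * r) := by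
                    rw [mul_assoc, ← ENNReal.ofReal_mul hθ0.le]
          _ = c * ENNReal.ofReal (t * d) := by
              rw [← mul_add, ← ENNReal.ofReal_add (mul_pos hθ0 hr.1).le
                (mul_nonneg hTIcc.1 hd.le)]
              congr 2
              rw [htdef]
              field_simp [htdef]
              ring
      exact absurd (le_csSup hAbdd htA) (not_le.mpr ht0)
    -- conclude
    have hfin : edist (f v) (f u) ≤ c * ENNReal.ofReal d := by
      have := hTA.2
      rw [hT1] at this
      simpa [hgdef, hγdef] using this
    rw [ENNReal.div_le_iff_le_mul (Or.inl (edist_pos.mpr huv).ne')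
      (Or.inl (edist_ne_top u v))]
    rw [heuv, edist_comm]
    exact hfin
  · -- easy direction: K ≤ L
    rw [hKdef]
    refine iSup₂_le fun x hx => ?_
    refine liminf_le_of_frequently_le ?_
      (isBoundedUnder_of_eventually_ge (Eventually.of_forall fun _ => bot_le))
    have hev : ∀ᶠ r in 𝓝[>] (0:ℝ), (⨆ u ∈ D ∩ ball x r,
        edist (f u) (f x) / ENNReal.ofReal r) ≤ L := by
      filter_upwards [self_mem_nhdsWithin] with r hr
      refine iSup₂_le fun w hw => ?_
      rcases eq_or_ne w x with rfl | hwx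
      · simp
      have h1 : edist (f w) (f x) / edist w x ≤ L := by
        rw [hLdef]
        exact le_trans (le_iSup₂ (f := fun v (_ : v ∈ D) => edist (f w) (f v) / edist w v) x hx)
          (le_iSup₂ (f := fun u (_ : u ∈ D) => ⨆ v ∈ D, edist (f u) (f v) / edist u v)
            w hw.1)
      rw [ENNReal.div_le_iff_le_mul (Or.inl (edist_pos.mpr hwx).ne')
        (Or.inl (edist_ne_top w x))] at h1
      rw [ENNReal.div_le_iff_le_mul (Or.inl (ENNReal.ofReal_pos.mpr hr).ne')
        (Or.inl ENNReal.ofReal_ne_top)]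
      calc edist (f w) (f x) ≤ L * edist w x := h1
        _ ≤ L * ENNReal.ofReal r := by
            refine mul_le_mul_right ?_ L
            rw [edist_dist]
            exact ENNReal.ofReal_le_ofReal (le_of_lt (mem_ball.mp hw.2))
    exact hev.frequently
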